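/- Let a, b, p ∈ ℂ and let c be the braiding of type R_{1,1} on V = ℂ³ with parameters t = −1, a, b, p. Then the kernel of id_{V⊗V} + c is exactly the 6-dimensional subspace of V ⊗ V spanned by the six linearly independent elements: x₂⊗x₁ + x₁⊗x₂; x₃⊗x₁ + x₁⊗x₃; x₃⊗x₂ + x₂⊗x₃ − b x₁⊗x₂; x₁⊗x₁; x₂⊗x₂; x₃⊗x₃ − b x₁⊗x₃ + p x₁⊗x₂. -/
import Mathlib


open TensorProduct

/-- `V = ℂ³`. -/
abbrev V3 : Type := Fin 3 → ℂ

/-- The standard basis vectors `x₁ = xv 0`, `x₂ = xv 1`, `x₃ = xv 2` of `ℂ³`. -/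
noncomputable def xv (i : Fin 3) : V3 := Pi.single i 1

noncomputable def coordV (i j : Fin 3) : V3 ⊗[ℂ] V3 →ₗ[ℂ] ℂ :=
  TensorProduct.lift (LinearMap.mk₂ ℂ (fun v w => v i * w j)
    (fun _ _ _ => by simp [add_mul]) (fun _ _ _ => by simp [mul_assoc])
    (fun _ _ _ => by simp [mul_add]) (fun _ _ _ => by simp; ring))

@[simp] lemma coordV_tmul (i j : Fin 3) (v w : V3) :
    coordV i j (v ⊗ₜ[ℂ] w) = v i * w j := rfl

set_option maxHeartbeats 1000000 in
/-- for the braiding `c` of type `R_{1,1}` on `ℂ³` with parameters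
`t = -1, a, b, p`, the kernel of `id + c` is exactly the 6-dimensional subspace spanned
by the six listed linearly independent elements. -/
theorem ker_id_add_c_R11_t_neg_one (a b p : ℂ)
    (c : V3 ⊗[ℂ] V3 →ₗ[ℂ] V3 ⊗[ℂ] V3)
    (h11 : c (xv 0 ⊗ₜ[ℂ] xv 0) = (-1 : ℂ) • (xv 0 ⊗ₜ[ℂ] xv 0))
    (h21 : c (xv 1 ⊗ₜ[ℂ] xv 0) = (-1 : ℂ) • (xv 0 ⊗ₜ[ℂ] xv 1))
    (h31 : c (xv 2 ⊗ₜ[ℂ] xv 0) = (-1 : ℂ) • (xv 0 ⊗ₜ[ℂ] xv 2)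
      + ((-1 : ℂ) * a) • (xv 0 ⊗ₜ[ℂ] xv 0))
    (h12 : c (xv 0 ⊗ₜ[ℂ] xv 1) = (-1 : ℂ) • (xv 1 ⊗ₜ[ℂ] xv 0))
    (h22 : c (xv 1 ⊗ₜ[ℂ] xv 1) = (-1 : ℂ) • (xv 1 ⊗ₜ[ℂ] xv 1))
    (h32 : c (xv 2 ⊗ₜ[ℂ] xv 1) = (-1 : ℂ) • (xv 1 ⊗ₜ[ℂ] xv 2)
      + ((-1 : ℂ) * a) • (xv 1 ⊗ₜ[ℂ] xv 0) + ((-1 : ℂ) * (a - b)) • (xv 0 ⊗ₜ[ℂ] xv 1))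
    (h13 : c (xv 0 ⊗ₜ[ℂ] xv 2) = (-1 : ℂ) • (xv 2 ⊗ₜ[ℂ] xv 0)
      - ((-1 : ℂ) * a) • (xv 0 ⊗ₜ[ℂ] xv 0))
    (h23 : c (xv 1 ⊗ₜ[ℂ] xv 2) = (-1 : ℂ) • (xv 2 ⊗ₜ[ℂ] xv 1)
      + ((-1 : ℂ) * (b - a)) • (xv 1 ⊗ₜ[ℂ] xv 0) - ((-1 : ℂ) * a) • (xv 0 ⊗ₜ[ℂ] xv 1))
    (h33 : c (xv 2 ⊗ₜ[ℂ] xv 2) = (-1 : ℂ) • (xv 2 ⊗ₜ[ℂ] xv 2)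
      + ((-1 : ℂ) * b) • (xv 2 ⊗ₜ[ℂ] xv 0) - ((-1 : ℂ) * p) • (xv 1 ⊗ₜ[ℂ] xv 0)
      - ((-1 : ℂ) * b) • (xv 0 ⊗ₜ[ℂ] xv 2) + ((-1 : ℂ) * p) • (xv 0 ⊗ₜ[ℂ] xv 1)
      - ((-1 : ℂ) * a * b) • (xv 0 ⊗ₜ[ℂ] xv 0)) :
    LinearIndependent ℂ
      (![xv 1 ⊗ₜ[ℂ] xv 0 + xv 0 ⊗ₜ[ℂ] xv 1,
         xv 2 ⊗ₜ[ℂ] xv 0 + xv 0 ⊗ₜ[ℂ] xv 2,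
         xv 2 ⊗ₜ[ℂ] xv 1 + xv 1 ⊗ₜ[ℂ] xv 2 - b • (xv 0 ⊗ₜ[ℂ] xv 1),
         xv 0 ⊗ₜ[ℂ] xv 0,
         xv 1 ⊗ₜ[ℂ] xv 1,
         xv 2 ⊗ₜ[ℂ] xv 2 - b • (xv 0 ⊗ₜ[ℂ] xv 2) + p • (xv 0 ⊗ₜ[ℂ] xv 1)] :
        Fin 6 → V3 ⊗[ℂ] V3) ∧
    LinearMap.ker (LinearMap.id + c) = Submodule.span ℂ
      (Set.range (![xv 1 ⊗ₜ[ℂ] xv 0 + xv 0 ⊗ₜ[ℂ] xv 1,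
         xv 2 ⊗ₜ[ℂ] xv 0 + xv 0 ⊗ₜ[ℂ] xv 2,
         xv 2 ⊗ₜ[ℂ] xv 1 + xv 1 ⊗ₜ[ℂ] xv 2 - b • (xv 0 ⊗ₜ[ℂ] xv 1),
         xv 0 ⊗ₜ[ℂ] xv 0,
         xv 1 ⊗ₜ[ℂ] xv 1,
         xv 2 ⊗ₜ[ℂ] xv 2 - b • (xv 0 ⊗ₜ[ℂ] xv 2) + p • (xv 0 ⊗ₜ[ℂ] xv 1)] :
        Fin 6 → V3 ⊗[ℂ] V3)) := by

  have hli : LinearIndependent ℂ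
      (![xv 1 ⊗ₜ[ℂ] xv 0 + xv 0 ⊗ₜ[ℂ] xv 1,
         xv 2 ⊗ₜ[ℂ] xv 0 + xv 0 ⊗ₜ[ℂ] xv 2,
         xv 2 ⊗ₜ[ℂ] xv 1 + xv 1 ⊗ₜ[ℂ] xv 2 - b • (xv 0 ⊗ₜ[ℂ] xv 1),
         xv 0 ⊗ₜ[ℂ] xv 0,
         xv 1 ⊗ₜ[ℂ] xv 1,
         xv 2 ⊗ₜ[ℂ] xv 2 - b • (xv 0 ⊗ₜ[ℂ] xv 2) + p • (xv 0 ⊗ₜ[ℂ] xv 1)] :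
        Fin 6 → V3 ⊗[ℂ] V3) := by
    rw [Fintype.linearIndependent_iff]
    intro g hg
    have hg' : g 0 • (xv 1 ⊗ₜ[ℂ] xv 0 + xv 0 ⊗ₜ[ℂ] xv 1)
        + g 1 • (xv 2 ⊗ₜ[ℂ] xv 0 + xv 0 ⊗ₜ[ℂ] xv 2)
        + g 2 • (xv 2 ⊗ₜ[ℂ] xv 1 + xv 1 ⊗ₜ[ℂ] xv 2 - b • (xv 0 ⊗ₜ[ℂ] xv 1))
        + g 3 • (xv 0 ⊗ₜ[ℂ] xv 0) + g 4 • (xv 1 ⊗ₜ[ℂ] xv 1)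
        + g 5 • (xv 2 ⊗ₜ[ℂ] xv 2 - b • (xv 0 ⊗ₜ[ℂ] xv 2) + p • (xv 0 ⊗ₜ[ℂ] xv 1)) = 0 := by
      rw [← hg, Fin.sum_univ_six]; rfl
    have e10 := congrArg (coordV 1 0) hg'
    have e20 := congrArg (coordV 2 0) hg'
    have e21 := congrArg (coordV 2 1) hg'
    have e00 := congrArg (coordV 0 0) hg'
    have e11 := congrArg (coordV 1 1) hg'
    have e22 := congrArg (coordV 2 2) hg'
    simp [xv, Pi.single_apply] at e10 e20 e21 e00 e11 e22
    intro i; fin_cases i <;> simp_all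
  refine ⟨hli, ?_⟩
  have k0 : (LinearMap.id + c : V3 ⊗[ℂ] V3 →ₗ[ℂ] V3 ⊗[ℂ] V3)
      (xv 1 ⊗ₜ[ℂ] xv 0 + xv 0 ⊗ₜ[ℂ] xv 1) = 0 := by
    simp only [LinearMap.add_apply, LinearMap.id_apply, map_add, map_sub, map_smul,
      h21, h12]
    module
  have k1 : (LinearMap.id + c : V3 ⊗[ℂ] V3 →ₗ[ℂ] V3 ⊗[ℂ] V3)
      (xv 2 ⊗ₜ[ℂ] xv 0 + xv 0 ⊗ₜ[ℂ] xv 2) = 0 := by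
    simp only [LinearMap.add_apply, LinearMap.id_apply, map_add, map_sub, map_smul,
      h31, h13]
    module
  have k2 : (LinearMap.id + c : V3 ⊗[ℂ] V3 →ₗ[ℂ] V3 ⊗[ℂ] V3)
      (xv 2 ⊗ₜ[ℂ] xv 1 + xv 1 ⊗ₜ[ℂ] xv 2 - b • (xv 0 ⊗ₜ[ℂ] xv 1)) = 0 := by
    simp only [LinearMap.add_apply, LinearMap.id_apply, map_add, map_sub, map_smul,
      h32, h23, h12]
    module
  have k3 : (LinearMap.id + c : V3 ⊗[ℂ] V3 →ₗ[ℂ] V3 ⊗[ℂ] V3)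
      (xv 0 ⊗ₜ[ℂ] xv 0) = 0 := by
    simp only [LinearMap.add_apply, LinearMap.id_apply, h11]
    module
  have k4 : (LinearMap.id + c : V3 ⊗[ℂ] V3 →ₗ[ℂ] V3 ⊗[ℂ] V3)
      (xv 1 ⊗ₜ[ℂ] xv 1) = 0 := by
    simp only [LinearMap.add_apply, LinearMap.id_apply, h22]
    module
  have k5 : (LinearMap.id + c : V3 ⊗[ℂ] V3 →ₗ[ℂ] V3 ⊗[ℂ] V3)
      (xv 2 ⊗ₜ[ℂ] xv 2 - b • (xv 0 ⊗ₜ[ℂ] xv 2) + p • (xv 0 ⊗ₜ[ℂ] xv 1)) = 0 := by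
    simp only [LinearMap.add_apply, LinearMap.id_apply, map_add, map_sub, map_smul,
      h33, h13, h12]
    module
  have hle : Submodule.span ℂ (Set.range
      (![xv 1 ⊗ₜ[ℂ] xv 0 + xv 0 ⊗ₜ[ℂ] xv 1,
         xv 2 ⊗ₜ[ℂ] xv 0 + xv 0 ⊗ₜ[ℂ] xv 2,
         xv 2 ⊗ₜ[ℂ] xv 1 + xv 1 ⊗ₜ[ℂ] xv 2 - b • (xv 0 ⊗ₜ[ℂ] xv 1),
         xv 0 ⊗ₜ[ℂ] xv 0,
         xv 1 ⊗ₜ[ℂ] xv 1,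
         xv 2 ⊗ₜ[ℂ] xv 2 - b • (xv 0 ⊗ₜ[ℂ] xv 2) + p • (xv 0 ⊗ₜ[ℂ] xv 1)] :
        Fin 6 → V3 ⊗[ℂ] V3)) ≤ LinearMap.ker (LinearMap.id + c) := by
    rw [Submodule.span_le]
    rintro x ⟨i, rfl⟩
    fin_cases i
    · exact k0
    · exact k1
    · exact k2
    · exact k3
    · exact k4
    · exact k5
  have hv : LinearIndependent ℂ
      (![(LinearMap.id + c : V3 ⊗[ℂ] V3 →ₗ[ℂ] V3 ⊗[ℂ] V3) (xv 1 ⊗ₜ[ℂ] xv 0),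
         (LinearMap.id + c : V3 ⊗[ℂ] V3 →ₗ[ℂ] V3 ⊗[ℂ] V3) (xv 2 ⊗ₜ[ℂ] xv 0),
         (LinearMap.id + c : V3 ⊗[ℂ] V3 →ₗ[ℂ] V3 ⊗[ℂ] V3) (xv 2 ⊗ₜ[ℂ] xv 1)]) := by
    rw [Fintype.linearIndependent_iff]
    intro g hg
    have hg' : g 0 • ((LinearMap.id + c : V3 ⊗[ℂ] V3 →ₗ[ℂ] V3 ⊗[ℂ] V3) (xv 1 ⊗ₜ[ℂ] xv 0))
        + g 1 • ((LinearMap.id + c : V3 ⊗[ℂ] V3 →ₗ[ℂ] V3 ⊗[ℂ] V3) (xv 2 ⊗ₜ[ℂ] xv 0))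
        + g 2 • ((LinearMap.id + c : V3 ⊗[ℂ] V3 →ₗ[ℂ] V3 ⊗[ℂ] V3) (xv 2 ⊗ₜ[ℂ] xv 1))
        = 0 := by
      rw [← hg, Fin.sum_univ_three]; rfl
    simp only [LinearMap.add_apply, LinearMap.id_apply, h21, h31, h32] at hg'
    have e21 := congrArg (coordV 2 1) hg'
    have e20 := congrArg (coordV 2 0) hg'
    have e10 := congrArg (coordV 1 0) hg'
    simp [xv, Pi.single_apply] at e21 e20 e10
    intro i; fin_cases i <;> simp_all
  have hrle : Submodule.span ℂ (Set.range
      (![(LinearMap.id + c : V3 ⊗[ℂ] V3 →ₗ[ℂ] V3 ⊗[ℂ] V3) (xv 1 ⊗ₜ[ℂ] xv 0),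
         (LinearMap.id + c : V3 ⊗[ℂ] V3 →ₗ[ℂ] V3 ⊗[ℂ] V3) (xv 2 ⊗ₜ[ℂ] xv 0),
         (LinearMap.id + c : V3 ⊗[ℂ] V3 →ₗ[ℂ] V3 ⊗[ℂ] V3) (xv 2 ⊗ₜ[ℂ] xv 1)]))
      ≤ LinearMap.range (LinearMap.id + c) := by
    rw [Submodule.span_le]
    rintro x ⟨i, rfl⟩
    fin_cases i
    · exact ⟨_, rfl⟩
    · exact ⟨_, rfl⟩
    · exact ⟨_, rfl⟩
  have h9 : Module.finrank ℂ (V3 ⊗[ℂ] V3) = 9 := by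
    simp [Module.finrank_tensorProduct]
  have hr3 : 3 ≤ Module.finrank ℂ (LinearMap.range (LinearMap.id + c)) := by
    have := Submodule.finrank_mono hrle
    rwa [finrank_span_eq_card hv, Fintype.card_fin] at this
  have hrn := LinearMap.finrank_range_add_finrank_ker
    (LinearMap.id + c : V3 ⊗[ℂ] V3 →ₗ[ℂ] V3 ⊗[ℂ] V3)
  rw [h9] at hrn
  have hk6 : Module.finrank ℂ (LinearMap.ker (LinearMap.id + c :
      V3 ⊗[ℂ] V3 →ₗ[ℂ] V3 ⊗[ℂ] V3)) ≤ 6 := by omega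
  have hs6 := finrank_span_eq_card hli
  rw [Fintype.card_fin] at hs6
  exact (Submodule.eq_of_le_of_finrank_le hle (by rw [hs6]; exact hk6)).symm
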